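/- Low Rank Reduction: Let A_1,...,A_m ∈ R^{n×n} have rank at most r, constrained by graph G(V,E), and fix factorizations A_σ = X_σ Y_σ^T with X_σ, Y_σ ∈ R^{n×r}. Define A'_{σ₁σ₂} = Y_{σ₁}^T X_{σ₂} ∈ R^{r×r} and construct the graph G'(V',E') with V' = E and an edge from (u,v,σ₁) to (v,w,σ₂) labeled by the pair (σ₂,σ₁) whenever (u,v,σ₁),(v,w,σ₂) ∈ E. Then the constrained joint spectral radii agree: ρ(G,A) = ρ(G',A'). -/

import Mathlib

open scoped Classical
open Filter MvPolynomial Matrix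

attribute [local instance] Matrix.frobeniusSeminormedAddCommGroup

/-- The Frobenius norm, a submultiplicative matrix norm. -/
noncomputable def frob {a b : ℕ} (M : Matrix (Fin a) (Fin b) ℝ) : ℝ :=
  Real.sqrt (∑ i, ∑ j, (M i j)^2)

lemma frob_eq_norm {a b : ℕ} (M : Matrix (Fin a) (Fin b) ℝ) : frob M = ‖M‖ := by
  rw [Matrix.frobenius_norm_def, frob, Real.sqrt_eq_rpow]
  congr 1
  simp [Real.norm_eq_abs, Real.rpow_two, sq_abs]

lemma frob_nonneg {a b : ℕ} (M : Matrix (Fin a) (Fin b) ℝ) : 0 ≤ frob M := Real.sqrt_nonneg _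

lemma frob_mul_le {a b c : ℕ} (M : Matrix (Fin a) (Fin b) ℝ) (N : Matrix (Fin b) (Fin c) ℝ) :
    frob (M * N) ≤ frob M * frob N := by
  simp only [frob_eq_norm]; exact Matrix.frobenius_norm_mul M N

/-- The set `E_k` of paths of length `k` in the labeled graph with edge set `E ⊆ V × V × L`:
sequences of `k` edges of `E` such that the target of each edge is the source of the next. -/
noncomputable def pathSet {V L : Type*} [Fintype V] [Fintype L]
    (E : Finset (V × V × L)) (k : ℕ) : Finset (Fin k → V × V × L) :=
  Finset.univ.filter (fun s =>
    (∀ i, s i ∈ E) ∧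
    ∀ (i : ℕ) (h : i + 1 < k), (s ⟨i, Nat.lt_of_succ_lt h⟩).2.1 = (s ⟨i+1, h⟩).1)

/-- The sequence of labels along a path. -/
def labels {V L : Type*} {k : ℕ} (s : Fin k → V × V × L) : Fin k → L :=
  fun i => (s i).2.2

/-- The product of matrices along a label sequence: `A_s = A_{σ_k} ⋯ A_{σ_1}`. -/
noncomputable def prodA {n : ℕ} {L : Type*} (A : L → Matrix (Fin n) (Fin n) ℝ)
    {k : ℕ} (σ : Fin k → L) : Matrix (Fin n) (Fin n) ℝ :=
  ((List.ofFn σ).reverse.map A).prod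

/-- Maximum of a real-valued function over a (nonempty) finite set. -/
noncomputable def maxOver {α : Type*} (s : Finset α) (f : α → ℝ) : ℝ :=
  sSup (f '' ↑s)

lemma le_maxOver {α : Type*} {s : Finset α} {f : α → ℝ} {x : α} (hx : x ∈ s) :
    f x ≤ maxOver s f :=
  le_csSup (Set.Finite.bddAbove (s.finite_toSet.image f)) ⟨x, hx, rfl⟩

lemma maxOver_nonneg {α : Type*} {s : Finset α} {f : α → ℝ} (h : ∀ x ∈ s, 0 ≤ f x) :
    0 ≤ maxOver s f := by
  rcases s.eq_empty_or_nonempty with rfl | ⟨x, hx⟩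
  · simp [maxOver, Real.sSup_empty]
  · exact le_trans (h x hx) (le_maxOver hx)

lemma maxOver_le {α : Type*} {s : Finset α} {f : α → ℝ} {B : ℝ} (hB : 0 ≤ B)
    (h : ∀ x ∈ s, f x ≤ B) : maxOver s f ≤ B :=
  Real.sSup_le (by rintro y ⟨x, hx, rfl⟩; exact h x hx) hB

section lists

variable {m n r : ℕ} (A : Fin m → Matrix (Fin n) (Fin n) ℝ)
  (X Y : Fin m → Matrix (Fin n) (Fin r) ℝ)
  (A' : Fin m × Fin m → Matrix (Fin r) (Fin r) ℝ)

lemma claim1 (hA : ∀ σ, A σ = X σ * (Y σ)ᵀ) (hA' : ∀ p : Fin m × Fin m, A' p = (Y p.1)ᵀ * X p.2) :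
    ∀ (l : List (Fin m)) (a : Fin m),
      ((a :: l).reverse.map A).prod =
        X ((a :: l).getLast (List.cons_ne_nil a l)) *
          (((l.zip (a :: l)).reverse.map A').prod) * (Y a)ᵀ := by
  intro l
  induction l with
  | nil => intro a; simp [hA]
  | cons b l ih =>
    intro a
    have h1 : ((a :: b :: l).reverse.map A).prod = (((b :: l).reverse.map A).prod) * A a := by
      rw [List.reverse_cons, List.map_append, List.prod_append]; simp
    have h2 : (b :: l).zip (a :: b :: l) = (b, a) :: l.zip (b :: l) := rfl
    have h3 : ((a :: b :: l).getLast (List.cons_ne_nil _ _)) =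
        ((b :: l).getLast (List.cons_ne_nil _ _)) := List.getLast_cons _
    rw [h1, ih b, h2, h3, List.reverse_cons, List.map_append, List.prod_append]
    simp only [List.map_cons, List.map_nil, List.prod_cons, List.prod_nil, mul_one]
    rw [hA a, hA' (b, a)]
    simp only [Matrix.mul_assoc]

lemma claim2 (hA : ∀ σ, A σ = X σ * (Y σ)ᵀ) (hA' : ∀ p : Fin m × Fin m, A' p = (Y p.1)ᵀ * X p.2) :
    ∀ (l : List (Fin m)) (a b : Fin m),
      (((b :: l).zip (a :: b :: l)).reverse.map A').prod =
        (Y ((b :: l).getLast (List.cons_ne_nil b l)))ᵀ *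
          (((b :: l).dropLast.reverse.map A).prod) * X a := by
  intro l
  induction l with
  | nil => intro a b; simp [hA']
  | cons c l ih =>
    intro a b
    have h2 : (b :: c :: l).zip (a :: b :: c :: l) = (b, a) :: (c :: l).zip (b :: c :: l) := rfl
    have h3 : ((b :: c :: l).getLast (List.cons_ne_nil _ _)) =
        ((c :: l).getLast (List.cons_ne_nil _ _)) := List.getLast_cons _
    have h4 : (b :: c :: l).dropLast = b :: (c :: l).dropLast := rfl
    rw [h2, h3, h4, List.reverse_cons, List.map_append, List.prod_append,
      List.reverse_cons, List.map_append, List.prod_append, ih b c]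
    simp only [List.map_cons, List.map_nil, List.prod_cons, List.prod_nil, mul_one]
    rw [hA' (b, a), hA b]
    simp only [Matrix.mul_assoc]

end lists

lemma zip_ofFn' {L : Type*} {k : ℕ} (σ : Fin (k+1) → L) :
    (List.ofFn (fun i : Fin k => σ i.succ)).zip (List.ofFn σ) =
      List.ofFn (fun i : Fin k => (σ i.succ, σ i.castSucc)) := by
  apply List.ext_getElem
  · simp
  · intro i h1 h2
    simp only [List.getElem_zip, List.getElem_ofFn]
    simp at h2
    congr 1

lemma dropLast_ofFn' {L : Type*} {k : ℕ} (σ : Fin (k+2) → L) :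
    (List.ofFn (fun i : Fin (k+1) => σ i.succ)).dropLast =
      List.ofFn (fun i : Fin k => σ i.succ.castSucc) := by
  apply List.ext_getElem
  · simp
  · intro i h1 h2
    simp only [List.getElem_dropLast, List.getElem_ofFn]
    simp at h2
    congr 1

lemma getLast_cons_eq_ofFn {L : Type*} {k : ℕ} (σ : Fin (k+1) → L) (a : L) (l : List L)
    (h : a :: l = List.ofFn σ) :
    (a :: l).getLast (List.cons_ne_nil a l) = σ (Fin.last k) := by
  rw [List.getLast_eq_getElem]
  simp only [h, List.getElem_ofFn, List.length_ofFn]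
  congr 1

lemma g_tendsto {C q : ℝ} (hC : 0 < C) (hq : 0 < q) :
    Tendsto (fun k : ℕ => (C * q^k) ^ ((1:ℝ)/(k+1))) atTop (nhds q) := by
  have h1 : Tendsto (fun k : ℕ => (1:ℝ)/(k+1)) atTop (nhds 0) :=
    tendsto_one_div_add_atTop_nhds_zero_nat
  have h2 : Tendsto (fun k : ℕ =>
      Real.log C * ((1:ℝ)/(k+1)) + (1 - (1:ℝ)/(k+1)) * Real.log q) atTop
      (nhds (Real.log q)) := by
    have hc : Tendsto (fun _ : ℕ => (1:ℝ)) atTop (nhds 1) := tendsto_const_nhds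
    have := (h1.const_mul (Real.log C)).add ((hc.sub h1).mul_const (Real.log q))
    simpa using this
  have h3 := (Real.continuous_exp.tendsto _).comp h2
  rw [Real.exp_log hq] at h3
  refine h3.congr fun k => ?_
  have hk : ((k:ℝ)+1) ≠ 0 := by positivity
  rw [Function.comp_apply, Real.rpow_def_of_pos (by positivity),
    Real.log_mul (ne_of_gt hC) (by positivity), Real.log_pow]
  congr 1
  field_simp
  ring

lemma squeeze_aux {a b : ℕ → ℝ} {ρ ρ' C : ℝ} (hC : 1 ≤ C)
    (ha : Tendsto a atTop (nhds ρ)) (hb : Tendsto b atTop (nhds ρ'))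
    (hb0 : ∀ k, 0 ≤ b k)
    (hab : ∀ k : ℕ, 1 ≤ k → ∀ q : ℝ, 0 < q → b k ≤ q →
      a (k+1) ≤ (C * q^k) ^ ((1:ℝ)/(k+1))) :
    ρ ≤ ρ' := by
  have hρ'0 : 0 ≤ ρ' := le_of_tendsto_of_tendsto' tendsto_const_nhds hb hb0
  have key : ∀ ε : ℝ, 0 < ε → ρ ≤ ρ' + ε := by
    intro ε hε
    have hq : 0 < ρ' + ε := by linarith
    have hev : ∀ᶠ k in atTop, b k ≤ ρ' + ε :=
      hb.eventually (eventually_le_nhds (by linarith))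
    have hev2 : ∀ᶠ k : ℕ in atTop, a (k+1) ≤ (C * (ρ'+ε)^k) ^ ((1:ℝ)/(k+1)) := by
      filter_upwards [hev, eventually_ge_atTop 1] with k hk1 hk2
      exact hab k hk2 (ρ'+ε) hq hk1
    have hg := g_tendsto (lt_of_lt_of_le one_pos hC) hq
    have ha' : Tendsto (fun k : ℕ => a (k+1)) atTop (nhds ρ) :=
      ha.comp (tendsto_add_atTop_nat 1)
    exact le_of_tendsto_of_tendsto ha' hg hev2
  by_contra h
  push_neg at h
  have := key ((ρ - ρ')/2) (by linarith)
  linarith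

lemma frob_sandwich {p q u w : ℕ} (M : Matrix (Fin p) (Fin q) ℝ) (P : Matrix (Fin q) (Fin u) ℝ)
    (N : Matrix (Fin u) (Fin w) ℝ) {C : ℝ} (hM : frob M ≤ C) (hN : frob N ≤ C) :
    frob (M * P * N) ≤ C^2 * frob P := by
  have hC0 : 0 ≤ C := le_trans (frob_nonneg M) hM
  calc frob (M * P * N) ≤ frob (M * P) * frob N := frob_mul_le _ _
    _ ≤ frob (M * P) * C := mul_le_mul_of_nonneg_left hN (frob_nonneg _)
    _ ≤ (frob M * frob P) * C := mul_le_mul_of_nonneg_right (frob_mul_le _ _) hC0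
    _ ≤ (C * frob P) * C := mul_le_mul_of_nonneg_right
        (mul_le_mul_of_nonneg_right hM (frob_nonneg _)) hC0
    _ = C^2 * frob P := by ring

section primed
variable {m n r : ℕ} (A : Fin m → Matrix (Fin n) (Fin n) ℝ)
  (X Y : Fin m → Matrix (Fin n) (Fin r) ℝ)
  (A' : Fin m × Fin m → Matrix (Fin r) (Fin r) ℝ)

lemma claim1' (hA : ∀ σ, A σ = X σ * (Y σ)ᵀ) (hA' : ∀ p : Fin m × Fin m, A' p = (Y p.1)ᵀ * X p.2)
    {k : ℕ} (σ : Fin (k+1) → Fin m) :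
    ((List.ofFn σ).reverse.map A).prod =
      X (σ (Fin.last k)) *
        ((List.ofFn (fun i : Fin k => (σ i.succ, σ i.castSucc))).reverse.map A').prod *
        (Y (σ 0))ᵀ := by
  rw [List.ofFn_succ (f := σ), claim1 A X Y A' hA hA' _ _,
    getLast_cons_eq_ofFn σ _ _ (List.ofFn_succ (f := σ)).symm, ← List.ofFn_succ (f := σ), zip_ofFn' σ]

lemma claim2' (hA : ∀ σ, A σ = X σ * (Y σ)ᵀ) (hA' : ∀ p : Fin m × Fin m, A' p = (Y p.1)ᵀ * X p.2)
    {k : ℕ} (σ : Fin (k+2) → Fin m) :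
    ((List.ofFn (fun i : Fin (k+1) => (σ i.succ, σ i.castSucc))).reverse.map A').prod =
      (Y (σ (Fin.last (k+1))))ᵀ *
        ((List.ofFn (fun i : Fin k => σ i.succ.castSucc)).reverse.map A).prod * X (σ 0) := by
  have hexp : (List.ofFn fun i : Fin (k+1) => σ i.succ) =
      σ (0 : Fin (k+1)).succ :: List.ofFn (fun i : Fin k => σ i.succ.succ) := List.ofFn_succ (f := _)
  rw [← zip_ofFn' σ, List.ofFn_succ (f := σ), hexp, claim2 A X Y A' hA hA' _ _ _,
    getLast_cons_eq_ofFn (fun i : Fin (k+1) => σ i.succ) _ _ hexp.symm]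
  rw [show (σ (0 : Fin (k+1)).succ :: List.ofFn (fun i : Fin k => σ i.succ.succ)).dropLast =
    (List.ofFn fun i : Fin (k+1) => σ i.succ).dropLast from by rw [hexp]]
  rw [dropLast_ofFn' σ]
  rfl

end primed

/-- Strong connectivity: every node reaches every node by a path of length ≥ 1. -/
def StronglyConnected {V L : Type*} [Fintype V] [Fintype L]
    (E : Finset (V × V × L)) : Prop :=
  ∀ u v : V, ∃ k : ℕ, ∃ s ∈ pathSet E (k+1), (s 0).1 = u ∧ (s (Fin.last k)).2.1 = v

/-- Low Rank Reduction: if `A_σ = X_σ Y_σᵀ` with `X_σ, Y_σ ∈ ℝ^{n×r}`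
(so `rank A_σ ≤ r`), `A'_{σ₁σ₂} = Y_{σ₁}ᵀ X_{σ₂} ∈ ℝ^{r×r}`, and `G'(V',E')` is the graph
with `V' = E` and an edge from `(u,v,σ₁)` to `(v,w,σ₂)` labeled `(σ₂,σ₁)` whenever both
are edges of `G`, then the two constrained joint spectral radii agree:
`ρ(G,A) = ρ(G',A')`. -/
theorem low_rank_reduction {m n r : ℕ} (A : Fin m → Matrix (Fin n) (Fin n) ℝ)
    (X Y : Fin m → Matrix (Fin n) (Fin r) ℝ)
    (hA : ∀ σ, A σ = X σ * (Y σ)ᵀ)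
    {V : Type*} [Fintype V] (E : Finset (V × V × Fin m)) (hSC : StronglyConnected E)
    (A' : Fin m × Fin m → Matrix (Fin r) (Fin r) ℝ)
    (hA' : ∀ p : Fin m × Fin m, A' p = (Y p.1)ᵀ * X p.2)
    (E' : Finset ((V × V × Fin m) × (V × V × Fin m) × (Fin m × Fin m)))
    (hE' : ∀ e f : V × V × Fin m, ∀ l : Fin m × Fin m,
      (e, f, l) ∈ E' ↔ e ∈ E ∧ f ∈ E ∧ e.2.1 = f.1 ∧ l = (f.2.2, e.2.2))
    (ρ ρ' : ℝ)
    (hρ : Tendsto (fun k : ℕ =>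
        maxOver (pathSet E k) (fun s => frob (prodA A (labels s)) ^ ((1:ℝ)/k)))
      atTop (nhds ρ))
    (hρ' : Tendsto (fun k : ℕ =>
        maxOver (pathSet E' k) (fun s => frob (prodA A' (labels s)) ^ ((1:ℝ)/k)))
      atTop (nhds ρ')) :
    ρ = ρ' := by
  classical
  set C : ℝ := 1 + ∑ σ : Fin m, (frob (X σ) + frob ((Y σ)ᵀ)) with hCdef
  have hsum0 : (0:ℝ) ≤ ∑ σ : Fin m, (frob (X σ) + frob ((Y σ)ᵀ)) :=
    Finset.sum_nonneg fun σ _ => add_nonneg (frob_nonneg _) (frob_nonneg _)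
  have hC1 : 1 ≤ C := by rw [hCdef]; linarith
  have hC0 : 0 ≤ C := by linarith
  have hsingle : ∀ σ : Fin m, frob (X σ) + frob ((Y σ)ᵀ) ≤
      ∑ τ : Fin m, (frob (X τ) + frob ((Y τ)ᵀ)) := fun σ =>
    Finset.single_le_sum (f := fun τ => frob (X τ) + frob ((Y τ)ᵀ))
      (fun i _ => add_nonneg (frob_nonneg _) (frob_nonneg _)) (Finset.mem_univ σ)
  have hXC : ∀ σ, frob (X σ) ≤ C := by
    intro σ; have h1 := hsingle σ; have h2 := frob_nonneg ((Y σ)ᵀ); rw [hCdef]; linarith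
  have hYC : ∀ σ, frob ((Y σ)ᵀ) ≤ C := by
    intro σ; have h1 := hsingle σ; have h2 := frob_nonneg (X σ); rw [hCdef]; linarith
  have key1 : ∀ (k : ℕ) (s : Fin (k+1) → V × V × Fin m), s ∈ pathSet E (k+1) →
      ∃ t ∈ pathSet E' k, frob (prodA A (labels s)) ≤ C^2 * frob (prodA A' (labels t)) := by
    intro k s hs
    simp only [pathSet, Finset.mem_filter, Finset.mem_univ, true_and] at hs
    obtain ⟨hsE, hsP⟩ := hs
    refine ⟨fun i => (s i.castSucc, s i.succ, ((s i.succ).2.2, (s i.castSucc).2.2)), ?_, ?_⟩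
    · simp only [pathSet, Finset.mem_filter, Finset.mem_univ, true_and]
      refine ⟨?_, ?_⟩
      · intro i
        exact (hE' _ _ _).mpr ⟨hsE _, hsE _, hsP i.val (Nat.succ_lt_succ i.isLt), rfl⟩
      · intro i h
        rfl
    · have e1 := claim1' A X Y A' hA hA' (labels s)
      have e2 : (List.ofFn (fun i : Fin k => (labels s i.succ, labels s i.castSucc))) =
          List.ofFn (labels (fun i : Fin k =>
            (s i.castSucc, s i.succ, ((s i.succ).2.2, (s i.castSucc).2.2)))) := rfl
      simp only [prodA]
      rw [← e2, e1]
      exact frob_sandwich _ _ _ (hXC _) (hYC _)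
  have key2 : ∀ (k : ℕ) (t : Fin (k+1) → (V × V × Fin m) × (V × V × Fin m) × (Fin m × Fin m)),
      t ∈ pathSet E' (k+1) →
      ∃ s ∈ pathSet E k, frob (prodA A' (labels t)) ≤ C^2 * frob (prodA A (labels s)) := by
    intro k t ht
    simp only [pathSet, Finset.mem_filter, Finset.mem_univ, true_and] at ht
    obtain ⟨htE, htP⟩ := ht
    have hcomp : ∀ i, (t i).1 ∈ E ∧ (t i).2.1 ∈ E ∧ (t i).1.2.1 = (t i).2.1.1 ∧
        (t i).2.2 = ((t i).2.1.2.2, (t i).1.2.2) :=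
      fun i => (hE' (t i).1 (t i).2.1 (t i).2.2).mp (htE i)
    set σf : Fin (k+2) → Fin m := fun j =>
      if h : (j:ℕ) < k+1 then (t ⟨j, h⟩).1.2.2 else (t (Fin.last k)).2.1.2.2 with hσf
    have hfirst : ∀ i : Fin (k+1), σf i.castSucc = (t i).1.2.2 := by
      intro i
      simp only [hσf]
      rw [dif_pos (show ((i.castSucc : Fin (k+2)) : ℕ) < k+1 from i.isLt)]
      rfl
    have hnext : ∀ i : Fin (k+1), σf i.succ = (t i).2.1.2.2 := by
      intro i
      simp only [hσf]
      by_cases hi : (i:ℕ) + 1 < k + 1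
      · rw [dif_pos (show ((i.succ : Fin (k+2)) : ℕ) < k+1 from hi)]
        have h2 := htP i.val hi
        show (t ⟨i.val+1, hi⟩).1.2.2 = (t i).2.1.2.2
        rw [← h2]
      · rw [dif_neg (by simpa using hi)]
        have hlast : i = Fin.last k := by
          ext; simp only [Fin.val_last]; omega
        rw [hlast]
    refine ⟨fun i => (t i.castSucc).2.1, ?_, ?_⟩
    · simp only [pathSet, Finset.mem_filter, Finset.mem_univ, true_and]
      refine ⟨?_, ?_⟩
      · intro i; exact (hcomp _).2.1
      · intro i h
        have h1 := htP i (Nat.lt_succ_of_lt h)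
        show (t ⟨i, _⟩).2.1.2.1 = (t ⟨i+1, _⟩).2.1.1
        rw [h1]
        exact (hcomp ⟨i+1, Nat.lt_succ_of_lt h⟩).2.2.1
    · have labt : labels t = fun i : Fin (k+1) => (σf i.succ, σf i.castSucc) := by
        funext i
        show (t i).2.2 = _
        rw [(hcomp i).2.2.2, hnext i, hfirst i]
      have labs : labels (fun i : Fin k => (t i.castSucc).2.1) =
          fun i : Fin k => σf i.succ.castSucc := by
        funext i
        exact (hnext i.castSucc).symm
      simp only [prodA, labt, labs]
      rw [claim2' A X Y A' hA hA' σf]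
      exact frob_sandwich _ _ _ (hYC _) (hXC _)
  have hb0E : ∀ k, 0 ≤ maxOver (pathSet E k)
      (fun s => frob (prodA A (labels s)) ^ ((1:ℝ)/k)) :=
    fun k => maxOver_nonneg fun x _ => Real.rpow_nonneg (frob_nonneg _) _
  have hb0E' : ∀ k, 0 ≤ maxOver (pathSet E' k)
      (fun s => frob (prodA A' (labels s)) ^ ((1:ℝ)/k)) :=
    fun k => maxOver_nonneg fun x _ => Real.rpow_nonneg (frob_nonneg _) _
  have hCsq : 1 ≤ C^2 := by nlinarith
  have dir1 : ρ ≤ ρ' := by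
    refine squeeze_aux hCsq hρ hρ' hb0E' ?_
    intro k hk q hq hbq
    refine maxOver_le (by positivity) ?_
    intro s hs
    obtain ⟨t, htmem, hle⟩ := key1 k s hs
    have hvt : frob (prodA A' (labels t)) ≤ q^k := by
      have h1 : frob (prodA A' (labels t)) ^ ((1:ℝ)/k) ≤ q :=
        le_trans (le_maxOver (f := fun u => frob (prodA A' (labels u)) ^ ((1:ℝ)/(k:ℕ)))
          htmem) hbq
      have hk0 : (k:ℝ) ≠ 0 := Nat.cast_ne_zero.mpr (by omega)
      have h2 := pow_le_pow_left₀ (Real.rpow_nonneg (frob_nonneg _) _) h1 k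
      rwa [← Real.rpow_natCast (frob (prodA A' (labels t)) ^ ((1:ℝ)/k)) k,
        ← Real.rpow_mul (frob_nonneg _), one_div_mul_cancel hk0, Real.rpow_one] at h2
    have hfs : frob (prodA A (labels s)) ≤ C^2 * q^k :=
      le_trans hle (mul_le_mul_of_nonneg_left hvt (by positivity))
    have h3 := Real.rpow_le_rpow (frob_nonneg _) hfs
      (le_of_lt (by positivity : (0:ℝ) < (1:ℝ)/((k:ℝ)+1)))
    simpa [Nat.cast_add, Nat.cast_one] using h3
  have dir2 : ρ' ≤ ρ := by
    refine squeeze_aux hCsq hρ' hρ hb0E ?_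
    intro k hk q hq hbq
    refine maxOver_le (by positivity) ?_
    intro t htm
    obtain ⟨s, hsmem, hle⟩ := key2 k t htm
    have hvt : frob (prodA A (labels s)) ≤ q^k := by
      have h1 : frob (prodA A (labels s)) ^ ((1:ℝ)/k) ≤ q :=
        le_trans (le_maxOver (f := fun u => frob (prodA A (labels u)) ^ ((1:ℝ)/(k:ℕ)))
          hsmem) hbq
      have hk0 : (k:ℝ) ≠ 0 := Nat.cast_ne_zero.mpr (by omega)
      have h2 := pow_le_pow_left₀ (Real.rpow_nonneg (frob_nonneg _) _) h1 k
      rwa [← Real.rpow_natCast (frob (prodA A (labels s)) ^ ((1:ℝ)/k)) k,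
        ← Real.rpow_mul (frob_nonneg _), one_div_mul_cancel hk0, Real.rpow_one] at h2
    have hfs : frob (prodA A' (labels t)) ≤ C^2 * q^k :=
      le_trans hle (mul_le_mul_of_nonneg_left hvt (by positivity))
    have h3 := Real.rpow_le_rpow (frob_nonneg _) hfs
      (le_of_lt (by positivity : (0:ℝ) < (1:ℝ)/((k:ℝ)+1)))
    simpa [Nat.cast_add, Nat.cast_one] using h3
  exact le_antisymm dir1 dir2
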